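/- The closed convex hull of V̄ is exactly {(v, z) ∈ ℝ^m × [0,1]^{m×ℓ} : z_{i,j+1} ≤ z_{ij} for all i ∈ [m], j ∈ [ℓ−1]}. In particular, no inequality relating the continuous variables v to the binary variables z is valid for conv(V̄) beyond the ordering constraints on z. -/

import Mathlib

open Finset Filter Topology Set

/-- single-row set -/
def Ubar (ℓ : ℕ) (b : Fin ℓ → ℝ) : Set (ℝ × (Fin ℓ → ℝ)) :=
  {p | (∀ j, p.2 j = 0 ∨ p.2 j = 1) ∧
    ∀ j, 0 ≤ (p.1 - b j) * p.2 j ∧ (p.1 - b j) * (1 - p.2 j) ≤ 0}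

/-- single-row target -/
def Tone (ℓ : ℕ) : Set (ℝ × (Fin ℓ → ℝ)) :=
  {p | (∀ j, p.2 j ∈ Set.Icc (0:ℝ) 1) ∧
    ∀ j : Fin ℓ, ∀ h : (j:ℕ)+1 < ℓ, p.2 ⟨(j:ℕ)+1, h⟩ ≤ p.2 j}

lemma Ubar_subset_Tone (ℓ : ℕ) (b : Fin ℓ → ℝ) (hb : StrictMono b) :
    Ubar ℓ b ⊆ Tone ℓ := by
  rintro ⟨v, z⟩ ⟨h01, hc⟩
  constructor
  · intro j; rcases h01 j with h | h <;> rw [h] <;> constructor <;> norm_num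
  · intro j h
    have hbj : b j < b ⟨(j:ℕ)+1, h⟩ := hb (by simp [Fin.lt_def])
    rcases h01 ⟨(j:ℕ)+1, h⟩ with h1 | h1
    · rcases h01 j with h0 | h0 <;> rw [h0, h1] <;> norm_num
    · have c2 := (hc ⟨(j:ℕ)+1, h⟩).1
      rw [h1] at c2
      rcases h01 j with h0 | h0
      · exfalso
        have c1 := (hc j).2
        rw [h0] at c1
        nlinarith
      · rw [h0, h1]

lemma convex_Tone (ℓ : ℕ) : Convex ℝ (Tone ℓ) := by
  rintro ⟨v, z⟩ ⟨hz1, hz2⟩ ⟨w, y⟩ ⟨hy1, hy2⟩ a c ha hc hac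
  constructor
  · intro j
    have h1 := hz1 j; have h2 := hy1 j
    simp only [Set.mem_Icc] at *
    constructor
    · have := mul_nonneg ha h1.1; have := mul_nonneg hc h2.1
      simp only [Prod.snd_add, Prod.smul_snd, Pi.add_apply, Pi.smul_apply, smul_eq_mul]
      linarith
    · have := mul_le_mul_of_nonneg_left h1.2 ha
      have := mul_le_mul_of_nonneg_left h2.2 hc
      simp only [Prod.snd_add, Prod.smul_snd, Pi.add_apply, Pi.smul_apply, smul_eq_mul]
      linarith
  · intro j h
    have h1 := hz2 j h; have h2 := hy2 j h
    have := mul_le_mul_of_nonneg_left h1 ha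
    have := mul_le_mul_of_nonneg_left h2 hc
    simp only [Prod.snd_add, Prod.smul_snd, Pi.add_apply, Pi.smul_apply, smul_eq_mul]
    linarith

lemma isClosed_Tone (ℓ : ℕ) : IsClosed (Tone ℓ) := by
  have h1 : Tone ℓ = (⋂ j : Fin ℓ, {p : ℝ × (Fin ℓ → ℝ) | p.2 j ∈ Set.Icc (0:ℝ) 1}) ∩
      ⋂ j : Fin ℓ, ⋂ h : (j:ℕ)+1 < ℓ, {p : ℝ × (Fin ℓ → ℝ) | p.2 ⟨(j:ℕ)+1,h⟩ ≤ p.2 j} := by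
    ext p; simp [Tone, Set.mem_iInter]
  rw [h1]
  apply IsClosed.inter
  · exact isClosed_iInter fun j =>
      IsClosed.preimage ((continuous_apply j).comp continuous_snd) isClosed_Icc
  · exact isClosed_iInter fun j => isClosed_iInter fun h =>
      isClosed_le ((continuous_apply _).comp continuous_snd)
        ((continuous_apply _).comp continuous_snd)

theorem row (ℓ : ℕ) (hℓ : 1 ≤ ℓ) (b : Fin ℓ → ℝ) (hb : StrictMono b) :
    closure (convexHull ℝ (Ubar ℓ b)) = Tone ℓ := by
  apply subset_antisymm
  · exact closure_minimal (convexHull_min (Ubar_subset_Tone ℓ b hb) (convex_Tone ℓ))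
      (isClosed_Tone ℓ)
  · rintro ⟨v, z⟩ ⟨hz01, hmono⟩
    simp only [Set.mem_setOf_eq] at hz01 hmono
    -- the "cumulative" function
    set ζ : ℕ → ℝ := fun k => if k = 0 then 1 else if h : k ≤ ℓ then z ⟨k-1, by omega⟩ else 0
      with hζdef
    have hζ0 : ζ 0 = 1 := by simp [hζdef]
    have hζtop : ζ (ℓ+1) = 0 := by
      simp only [hζdef]
      rw [if_neg (by omega), dif_neg (by omega)]
    have h0ℓ : 0 < ℓ := hℓ
    have hl1 : ℓ - 1 < ℓ := by omega
    have hζk : ∀ k (h : k < ℓ), ζ (k+1) = z ⟨k, h⟩ := by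
      intro k h
      simp only [hζdef]
      rw [if_neg (by omega), dif_pos (by omega)]
      exact congrArg z (Fin.ext (by simp))
    have hmono' : ∀ k : ℕ, ∀ h : k + 1 < ℓ, z ⟨k+1, h⟩ ≤ z ⟨k, by omega⟩ := by
      intro k h
      exact hmono ⟨k, by omega⟩ h
    have hζmono : ∀ k, k ≤ ℓ → ζ (k+1) ≤ ζ k := by
      intro k hk
      rcases Nat.eq_zero_or_pos k with rfl | hk0
      · rw [hζ0, hζk 0 (by omega)]
        exact (hz01 _).2
      · rcases eq_or_lt_of_le hk with rfl | hklt
        · rw [hζtop]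
          have : ζ k = z ⟨k-1, by omega⟩ := by
            simp only [hζdef]; rw [if_neg (by omega), dif_pos (by omega)]
          rw [this]
          exact (hz01 _).1
        · have h1 : ζ k = z ⟨k-1, by omega⟩ := by
            simp only [hζdef]; rw [if_neg (by omega), dif_pos (by omega)]
          rw [h1, hζk k hklt]
          have he : (⟨k, hklt⟩ : Fin ℓ) = ⟨(k-1)+1, by omega⟩ := by
            simp only [Fin.mk.injEq]; omega
          rw [he]
          exact hmono' (k-1) (by omega)
    set lam : ℕ → ℝ := fun k => ζ k - ζ (k+1) with hlamdef
    have hlam_nonneg : ∀ k ∈ Finset.range (ℓ+1), 0 ≤ lam k := by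
      intro k hk
      simp only [Finset.mem_range] at hk
      have := hζmono k (by omega)
      simp only [hlamdef]; linarith
    have hlam_sum : ∑ k ∈ Finset.range (ℓ+1), lam k = 1 := by
      simp only [hlamdef]
      rw [Finset.sum_range_sub' ζ (ℓ+1), hζ0, hζtop, sub_zero]
    -- vertices
    set E : ℕ → Fin ℓ → ℝ := fun k j => if (j:ℕ) < k then 1 else 0 with hEdef
    set w : ℕ → ℝ := fun k => if h : k - 1 < ℓ then b ⟨k-1, h⟩ else 0 with hwdef
    have hwb : ∀ k (hk : k ≤ ℓ), w k = b ⟨k-1, by omega⟩ := by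
      intro k hk; simp only [hwdef]; rw [dif_pos (by omega)]
    have hUE : ∀ k, k ≤ ℓ → (w k, E k) ∈ Ubar ℓ b := by
      intro k hk
      constructor
      · intro j
        dsimp only
        simp only [hEdef]
        split <;> simp
      · intro j
        dsimp only
        rw [hwb k hk]
        by_cases hjk : (j:ℕ) < k
        · have hE1 : E k j = 1 := by simp [hEdef, hjk]
          rw [hE1]
          have : b j ≤ b ⟨k-1, by omega⟩ := hb.monotone (by simp [Fin.le_def]; omega)
          constructor
          · nlinarith
          · simp
        · have hE0 : E k j = 0 := by simp [hEdef, hjk]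
          rw [hE0]
          have : b ⟨k-1, by omega⟩ ≤ b j := hb.monotone (by simp [Fin.le_def]; omega)
          constructor
          · simp
          · nlinarith
    -- the base point q
    set vb : ℝ := ∑ k ∈ Finset.range (ℓ+1), lam k * w k with hvbdef
    have hkey : ∀ j : Fin ℓ, ∑ k ∈ Finset.range (ℓ+1), lam k * E k j = z j := by
      intro j
      set g : ℕ → ℝ := fun k => ζ (max k ((j:ℕ)+1)) with hgdef
      have h1 : ∀ k ∈ Finset.range (ℓ+1), lam k * E k j = g k - g (k+1) := by
        intro k _
        by_cases hjk : (j:ℕ) < k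
        · have hE1 : E k j = 1 := by simp [hEdef, hjk]
          rw [hE1, mul_one]
          simp only [hgdef, hlamdef]
          rw [max_eq_left (by omega), max_eq_left (by omega)]
        · have hE0 : E k j = 0 := by simp [hEdef, hjk]
          rw [hE0, mul_zero]
          simp only [hgdef]
          rw [max_eq_right (by omega), max_eq_right (by omega), sub_self]
      rw [Finset.sum_congr rfl h1, Finset.sum_range_sub' g (ℓ+1)]
      have hg0 : g 0 = z j := by
        simp only [hgdef]
        rw [max_eq_right (by omega), hζk j j.isLt]
      have hgtop : g (ℓ+1) = 0 := by
        simp only [hgdef]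
        rw [max_eq_left (by omega), hζtop]
      rw [hg0, hgtop, sub_zero]
    have hq : ((vb, z) : ℝ × (Fin ℓ → ℝ)) ∈ convexHull ℝ (Ubar ℓ b) := by
      have hqeq : ((vb, z) : ℝ × (Fin ℓ → ℝ)) =
          ∑ k ∈ Finset.range (ℓ+1), lam k • ((w k, E k) : ℝ × (Fin ℓ → ℝ)) := by
        apply Prod.ext
        · rw [Prod.fst_sum]
          simp only [Prod.smul_fst, smul_eq_mul]
          exact hvbdef
        · rw [Prod.snd_sum]
          funext j
          rw [Finset.sum_apply]
          simp only [Prod.smul_snd, Pi.smul_apply, smul_eq_mul]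
          exact (hkey j).symm
      rw [hqeq]
      refine (convex_convexHull ℝ (Ubar ℓ b)).sum_mem hlam_nonneg hlam_sum fun k hk => ?_
      exact subset_convexHull ℝ _ (hUE k (Nat.lt_succ_iff.mp (Finset.mem_range.mp hk)))
    -- the approximating sequence
    set ε : ℕ → ℝ := fun n => ((n:ℝ)+1)⁻¹ with hεdef
    have hεpos : ∀ n, 0 < ε n := fun n => by positivity
    have hεle1 : ∀ n, ε n ≤ 1 := fun n => by
      rw [hεdef]
      rw [inv_le_one_iff₀]
      right; push_cast; linarith [Nat.cast_nonneg (α := ℝ) n]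
    have hεlim : Tendsto ε atTop (𝓝 0) := by
      have := tendsto_one_div_add_atTop_nhds_zero_nat (𝕜 := ℝ)
      simpa [hεdef, one_div] using this
    have hεcancel : ∀ n, ε n * ((n:ℝ)+1) = 1 := fun n => by
      rw [hεdef]; field_simp
    rcases le_total vb v with hcase | hcase
    · -- v ≥ vb : use the all-ones vertex with large v-coordinate
      set T : ℕ → ℝ := fun n => max (b ⟨ℓ-1, hl1⟩) (vb + (v - vb) * ((n:ℝ)+1)) with hTdef
      have hpU : ∀ n, ((T n, fun _ => (1:ℝ)) : ℝ × (Fin ℓ → ℝ)) ∈ Ubar ℓ b := by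
        intro n
        constructor
        · intro j; right; rfl
        · intro j
          dsimp only
          have hTb : b j ≤ T n := le_trans (hb.monotone (by simp [Fin.le_def]; omega))
            (le_max_left _ _)
          constructor
          · nlinarith
          · simp
      set x : ℕ → ℝ × (Fin ℓ → ℝ) := fun n =>
        ((1 - ε n) * vb + ε n * T n, fun j => (1 - ε n) * z j + ε n * 1) with hxdef
      have hxmem : ∀ n, x n ∈ convexHull ℝ (Ubar ℓ b) := by
        intro n
        have hcombo : x n = (1 - ε n) • ((vb, z) : ℝ × (Fin ℓ → ℝ)) +
            ε n • ((T n, fun _ => (1:ℝ)) : ℝ × (Fin ℓ → ℝ)) := by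
          apply Prod.ext
          · simp [hxdef]
          · funext j
            simp [hxdef]
        rw [hcombo]
        exact (convex_convexHull ℝ (Ubar ℓ b)) hq
          (subset_convexHull ℝ _ (hpU n)) (by linarith [hεle1 n]) (le_of_lt (hεpos n)) (by ring)
      have hlim : Tendsto x atTop (𝓝 (v, z)) := by
        have h1 : Tendsto (fun n => (1 - ε n) * vb + ε n * T n) atTop (𝓝 v) := by
          have heq : (fun n => (1 - ε n) * vb + ε n * T n) =
              fun n => (1 - ε n) * vb +
                max (ε n * b ⟨ℓ-1, hl1⟩) (ε n * vb + (v - vb)) := by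
            funext n
            rw [hTdef]
            rw [mul_max_of_nonneg _ _ (le_of_lt (hεpos n))]
            congr 1
            rw [mul_add]
            congr 1
            rw [show ε n * ((v - vb) * ((n:ℝ)+1)) = ε n * ((n:ℝ)+1) * (v - vb) by ring,
              hεcancel n, one_mul]
          rw [heq]
          have : Tendsto (fun n => (1 - ε n) * vb +
              max (ε n * b ⟨ℓ-1, hl1⟩) (ε n * vb + (v - vb))) atTop
              (𝓝 ((1 - 0) * vb + max (0 * b ⟨ℓ-1, hl1⟩) (0 * vb + (v - vb)))) := by
            exact (((tendsto_const_nhds.sub hεlim).mul tendsto_const_nhds).add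
              (((hεlim.mul tendsto_const_nhds)).max
                ((hεlim.mul tendsto_const_nhds).add tendsto_const_nhds)))
          convert this using 2
          rw [zero_mul, zero_mul, zero_add, max_eq_right (by linarith)]
          ring
        have h2 : Tendsto (fun n => (fun j => (1 - ε n) * z j + ε n * 1 : Fin ℓ → ℝ))
            atTop (𝓝 z) := by
          rw [tendsto_pi_nhds]
          intro j
          have : Tendsto (fun n => (1 - ε n) * z j + ε n * 1) atTop
              (𝓝 ((1 - 0) * z j + 0 * 1)) :=
            ((tendsto_const_nhds.sub hεlim).mul tendsto_const_nhds).add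
              (hεlim.mul tendsto_const_nhds)
          simpa using this
        exact h1.prodMk_nhds h2
      exact mem_closure_of_tendsto hlim (Filter.Eventually.of_forall hxmem)
    · -- v ≤ vb : use the all-zeros vertex with small v-coordinate
      set T : ℕ → ℝ := fun n => min (b ⟨0, h0ℓ⟩) (vb + (v - vb) * ((n:ℝ)+1)) with hTdef
      have hpU : ∀ n, ((T n, fun _ => (0:ℝ)) : ℝ × (Fin ℓ → ℝ)) ∈ Ubar ℓ b := by
        intro n
        constructor
        · intro j; left; rfl
        · intro j
          dsimp only
          have hTb : T n ≤ b j := le_trans (min_le_left _ _)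
            (hb.monotone (by simp [Fin.le_def]))
          constructor
          · simp
          · nlinarith
      set x : ℕ → ℝ × (Fin ℓ → ℝ) := fun n =>
        ((1 - ε n) * vb + ε n * T n, fun j => (1 - ε n) * z j + ε n * 0) with hxdef
      have hxmem : ∀ n, x n ∈ convexHull ℝ (Ubar ℓ b) := by
        intro n
        have hcombo : x n = (1 - ε n) • ((vb, z) : ℝ × (Fin ℓ → ℝ)) +
            ε n • ((T n, fun _ => (0:ℝ)) : ℝ × (Fin ℓ → ℝ)) := by
          apply Prod.ext
          · simp [hxdef]
          · funext j
            simp [hxdef]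
        rw [hcombo]
        exact (convex_convexHull ℝ (Ubar ℓ b)) hq
          (subset_convexHull ℝ _ (hpU n)) (by linarith [hεle1 n]) (le_of_lt (hεpos n)) (by ring)
      have hlim : Tendsto x atTop (𝓝 (v, z)) := by
        have h1 : Tendsto (fun n => (1 - ε n) * vb + ε n * T n) atTop (𝓝 v) := by
          have heq : (fun n => (1 - ε n) * vb + ε n * T n) =
              fun n => (1 - ε n) * vb +
                min (ε n * b ⟨0, h0ℓ⟩) (ε n * vb + (v - vb)) := by
            funext n
            rw [hTdef]
            rw [mul_min_of_nonneg _ _ (le_of_lt (hεpos n))]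
            congr 1
            rw [mul_add]
            congr 1
            rw [show ε n * ((v - vb) * ((n:ℝ)+1)) = ε n * ((n:ℝ)+1) * (v - vb) by ring,
              hεcancel n, one_mul]
          rw [heq]
          have : Tendsto (fun n => (1 - ε n) * vb +
              min (ε n * b ⟨0, h0ℓ⟩) (ε n * vb + (v - vb))) atTop
              (𝓝 ((1 - 0) * vb + min (0 * b ⟨0, h0ℓ⟩) (0 * vb + (v - vb)))) := by
            exact (((tendsto_const_nhds.sub hεlim).mul tendsto_const_nhds).add
              (((hεlim.mul tendsto_const_nhds)).min
                ((hεlim.mul tendsto_const_nhds).add tendsto_const_nhds)))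
          convert this using 2
          rw [zero_mul, zero_mul, zero_add, min_eq_right (by linarith)]
          ring
        have h2 : Tendsto (fun n => (fun j => (1 - ε n) * z j + ε n * 0 : Fin ℓ → ℝ))
            atTop (𝓝 z) := by
          rw [tendsto_pi_nhds]
          intro j
          have : Tendsto (fun n => (1 - ε n) * z j + ε n * 0) atTop
              (𝓝 ((1 - 0) * z j + 0 * 0)) :=
            ((tendsto_const_nhds.sub hεlim).mul tendsto_const_nhds).add
              (hεlim.mul tendsto_const_nhds)
          simpa using this
        exact h1.prodMk_nhds h2
      exact mem_closure_of_tendsto hlim (Filter.Eventually.of_forall hxmem)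


/-- reindexing equivalence -/
noncomputable def rowEquiv (m ℓ : ℕ) : ((Fin m → ℝ) × (Fin m → Fin ℓ → ℝ)) ≃ₗ[ℝ] (Fin m → ℝ × (Fin ℓ → ℝ)) where
  toFun p := fun i => (p.1 i, p.2 i)
  invFun f := (fun i => (f i).1, fun i => (f i).2)
  map_add' p q := rfl
  map_smul' c p := rfl
  left_inv p := rfl
  right_inv f := rfl

/-- The set `V̄ ⊆ ℝ^m × {0,1}^{m×ℓ}`. -/
def Vbar (m ℓ : ℕ) (b : Fin ℓ → ℝ) : Set ((Fin m → ℝ) × (Fin m → Fin ℓ → ℝ)) :=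
  {vz | (∀ i j, vz.2 i j = 0 ∨ vz.2 i j = 1) ∧
    ∀ i j, 0 ≤ (vz.1 i - b j) * vz.2 i j ∧ (vz.1 i - b j) * (1 - vz.2 i j) ≤ 0}

/-- `cl conv(V̄) = {(v, z) ∈ ℝ^m × [0,1]^{m×ℓ} : z_{i,j+1} ≤ z_{ij} ∀ i ∈ [m], j ∈ [ℓ−1]}`. -/
theorem stmt6 (m ℓ : ℕ) (hm : 1 ≤ m) (hℓ : 1 ≤ ℓ)
    (b : Fin ℓ → ℝ) (hb : StrictMono b) :
    closure (convexHull ℝ (Vbar m ℓ b)) =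
      {vz : (Fin m → ℝ) × (Fin m → Fin ℓ → ℝ) |
        (∀ i j, vz.2 i j ∈ Set.Icc (0 : ℝ) 1) ∧
        ∀ i : Fin m, ∀ j : Fin ℓ, ∀ h : (j : ℕ) + 1 < ℓ,
          vz.2 i ⟨(j : ℕ) + 1, h⟩ ≤ vz.2 i j} := by
  set e := rowEquiv m ℓ with hedef
  set T : Set ((Fin m → ℝ) × (Fin m → Fin ℓ → ℝ)) :=
    {vz | (∀ i j, vz.2 i j ∈ Set.Icc (0 : ℝ) 1) ∧
        ∀ i : Fin m, ∀ j : Fin ℓ, ∀ h : (j : ℕ) + 1 < ℓ,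
          vz.2 i ⟨(j : ℕ) + 1, h⟩ ≤ vz.2 i j} with hTdef
  have hV : Vbar m ℓ b = e ⁻¹' (Set.pi Set.univ fun _ : Fin m => Ubar ℓ b) := by
    ext p
    simp only [Vbar, Ubar, Set.mem_preimage, Set.mem_pi, Set.mem_univ, forall_true_left,
      Set.mem_setOf_eq, hedef, rowEquiv]
    constructor
    · rintro ⟨h1, h2⟩ i
      exact ⟨fun j => h1 i j, fun j => h2 i j⟩
    · intro h
      exact ⟨fun i j => (h i).1 j, fun i j => (h i).2 j⟩
  have hT : T = e ⁻¹' (Set.pi Set.univ fun _ : Fin m => Tone ℓ) := by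
    ext p
    simp only [hTdef, Tone, Set.mem_preimage, Set.mem_pi, Set.mem_univ, forall_true_left,
      Set.mem_setOf_eq, hedef, rowEquiv]
    constructor
    · rintro ⟨h1, h2⟩ i
      exact ⟨fun j => h1 i j, fun j => h2 i j⟩
    · intro h
      exact ⟨fun i j => (h i).1 j, fun i j => (h i).2 j⟩
  have heq : ∀ s : Set ((Fin m → ℝ) × (Fin m → Fin ℓ → ℝ)), e '' s = ⇑e '' s := fun _ => rfl
  have einj : Function.Injective (⇑e) := e.injective
  apply Set.image_injective.mpr einj
  have eh : Homeomorph ((Fin m → ℝ) × (Fin m → Fin ℓ → ℝ)) (Fin m → ℝ × (Fin ℓ → ℝ)) :=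
    e.toContinuousLinearEquiv.toHomeomorph
  have ehcoe : ⇑e.toContinuousLinearEquiv.toHomeomorph = ⇑e := rfl
  calc ⇑e '' closure (convexHull ℝ (Vbar m ℓ b))
      = closure (⇑e '' convexHull ℝ (Vbar m ℓ b)) := by
        rw [← ehcoe, (e.toContinuousLinearEquiv.toHomeomorph).image_closure]
    _ = closure (convexHull ℝ (⇑e '' Vbar m ℓ b)) := by
        exact congrArg closure (e.toLinearMap.image_convexHull _)
    _ = closure (convexHull ℝ (Set.pi Set.univ fun _ : Fin m => Ubar ℓ b)) := by
        rw [hV, Set.image_preimage_eq _ e.surjective]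
    _ = Set.pi Set.univ fun _ : Fin m => closure (convexHull ℝ (Ubar ℓ b)) := by
        rw [convexHull_pi, closure_pi_set]
    _ = Set.pi Set.univ fun _ : Fin m => Tone ℓ := by
        simp only [row ℓ hℓ b hb]
    _ = ⇑e '' T := by
        rw [hT, Set.image_preimage_eq _ e.surjective]
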